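/- arXiv:1204.1543 — 2 statements merged into one kernel-verified Lean document; each statement's English description precedes it below -/
import Mathlib

section
/- Let K be a centrally symmetric convex 2n-gon a₁...a_{2n} in ℝ² centered at the origin. For each i = 1, ..., n let vᵢ = a_{i+1} - aᵢ, let fᵢ : ℝ² → ℝ be the linear function equal to 1 on the side [aᵢ, a_{i+1}], and let pᵢ = 2·Area(triangle(0, aᵢ, a_{i+1}))/Area(K). Then for all 1 ≤ i < j ≤ n, pᵢ pⱼ |fᵢ ∧ fⱼ| = |vᵢ ∧ vⱼ| / Area(K)². -/
open MeasureTheory Finset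

noncomputable def area (s : Set (ℝ × ℝ)) : ℝ := (volume s).toReal

def det2 (u v : ℝ × ℝ) : ℝ := u.1 * v.2 - u.2 * v.1

/-- The wedge `f ∧ g` of two linear functionals on ℝ², identified with the scalar
`f(e₁)g(e₂) − f(e₂)g(e₁)`. -/
def wedgeF (f g : (ℝ × ℝ) →ₗ[ℝ] ℝ) : ℝ := f (1, 0) * g (0, 1) - f (0, 1) * g (1, 0)


section Aux
open Set

lemma line_null : volume {p : ℝ × ℝ | p.1 + p.2 = 1} = 0 := by
  have hker : volume (LinearMap.ker ((LinearMap.fst ℝ ℝ ℝ) + (LinearMap.snd ℝ ℝ ℝ)) : Set (ℝ × ℝ)) = 0 := by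
    apply Measure.addHaar_submodule
    intro h
    have : ((1:ℝ), (0:ℝ)) ∈ LinearMap.ker ((LinearMap.fst ℝ ℝ ℝ) + (LinearMap.snd ℝ ℝ ℝ)) := by
      rw [h]; trivial
    simp [LinearMap.mem_ker] at this
  have heq : {p : ℝ × ℝ | p.1 + p.2 = 1} =
      (fun p : ℝ × ℝ => ((-1:ℝ),(0:ℝ)) + p) ⁻¹' (LinearMap.ker ((LinearMap.fst ℝ ℝ ℝ) + (LinearMap.snd ℝ ℝ ℝ)) : Set (ℝ × ℝ)) := by
    ext ⟨x, y⟩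
    simp only [mem_setOf_eq, Set.mem_preimage, SetLike.mem_coe, LinearMap.mem_ker, LinearMap.add_apply,
      LinearMap.fst_apply, LinearMap.snd_apply, Prod.fst_add, Prod.snd_add]
    constructor <;> intro h <;> linarith
  rw [heq, measure_preimage_add]
  exact hker

lemma int_eq : (∫ y in Icc (0:ℝ) 1, (((fun x : ℝ => (1:ℝ) - x) - (fun _ : ℝ => (0:ℝ))) y)) = 1/2 := by
  have : ((fun x : ℝ => (1:ℝ) - x) - fun _ : ℝ => (0:ℝ)) = fun x : ℝ => 1 - x := by funext x; simp
  rw [this, MeasureTheory.integral_Icc_eq_integral_Ioo, ← MeasureTheory.integral_Ioc_eq_integral_Ioo,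
    ← intervalIntegral.integral_of_le (by norm_num : (0:ℝ) ≤ 1)]
  rw [intervalIntegral.integral_sub intervalIntegrable_const intervalIntegral.intervalIntegrable_id]
  simp
  norm_num

lemma vol_S0 : volume {p : ℝ × ℝ | 0 ≤ p.1 ∧ 0 ≤ p.2 ∧ p.1 + p.2 ≤ 1} = ENNReal.ofReal (1/2) := by
  set S : Set (ℝ × ℝ) := {p : ℝ × ℝ | 0 ≤ p.1 ∧ 0 ≤ p.2 ∧ p.1 + p.2 ≤ 1} with hS
  set R : Set (ℝ × ℝ) := regionBetween (fun _ => (0:ℝ)) (fun x => 1 - x) (Icc 0 1) with hR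
  have hRvol : volume R = ENNReal.ofReal (1/2) := by
    rw [Measure.volume_eq_prod, volume_regionBetween_eq_integral
      (integrableOn_const (by simp) (by simp))
      (((intervalIntegrable_iff_integrableOn_Icc_of_le (by norm_num : (0:ℝ) ≤ 1))).mp
        (ContinuousOn.intervalIntegrable (by fun_prop))) measurableSet_Icc
      (fun x hx => by simp only [Set.mem_Icc] at hx; linarith [hx.2])]
    rw [int_eq]
  have hsub : R ⊆ S := by
    rintro ⟨x, y⟩ ⟨hx, hy⟩
    simp only [Set.mem_Icc] at hx
    simp only [Set.mem_Ioo] at hy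
    exact ⟨hx.1, le_of_lt hy.1, by linarith [hy.2]⟩
  have h1 : volume ((univ : Set ℝ) ×ˢ {(0:ℝ)}) = 0 := by
    rw [Measure.volume_eq_prod, Measure.prod_prod]; simp
  have hsup : S ⊆ R ∪ ((univ : Set ℝ) ×ˢ {(0:ℝ)} ∪ {p : ℝ × ℝ | p.1 + p.2 = 1}) := by
    rintro ⟨x, y⟩ ⟨hx, hy, hxy⟩
    simp only [mem_setOf_eq] at hx hy hxy
    rcases eq_or_lt_of_le hy with h | h
    · exact Or.inr (Or.inl (by simp [mem_prod, ← h]))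
    rcases eq_or_lt_of_le hxy with h2 | h2
    · exact Or.inr (Or.inr h2)
    · refine Or.inl ⟨?_, ?_⟩
      · simp only [Set.mem_Icc]; constructor <;> linarith
      · simp only [Set.mem_Ioo]; constructor <;> linarith
  refine le_antisymm ?_ ?_
  · calc volume S ≤ volume R + volume ((univ : Set ℝ) ×ˢ {(0:ℝ)} ∪ {p : ℝ × ℝ | p.1 + p.2 = 1}) :=
        le_trans (measure_mono hsup) (measure_union_le _ _)
    _ ≤ volume R + (volume ((univ : Set ℝ) ×ˢ {(0:ℝ)}) + volume {p : ℝ × ℝ | p.1 + p.2 = 1}) := by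
        gcongr; exact measure_union_le _ _
    _ = ENNReal.ofReal (1/2) := by rw [h1, line_null, hRvol]; simp
  · rw [← hRvol]; exact measure_mono hsub

lemma S0_eq : {p : ℝ × ℝ | 0 ≤ p.1 ∧ 0 ≤ p.2 ∧ p.1 + p.2 ≤ 1}
    = convexHull ℝ {((0:ℝ),(0:ℝ)), ((1:ℝ),(0:ℝ)), ((0:ℝ),(1:ℝ))} := by
  apply Set.Subset.antisymm
  · rintro ⟨x, y⟩ ⟨hx, hy, hxy⟩
    simp only [mem_setOf_eq] at hx hy hxy
    have h : ((x,y) : ℝ × ℝ) = ∑ i : Fin 3, (![1 - x - y, x, y] i) •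
        (![((0:ℝ),(0:ℝ)), ((1:ℝ),(0:ℝ)), ((0:ℝ),(1:ℝ))] i) := by
      simp [Fin.sum_univ_three, Prod.ext_iff]
    rw [h]
    apply (convex_convexHull ℝ _).sum_mem
    · intro i _
      fin_cases i <;> simp <;> linarith
    · simp [Fin.sum_univ_three]; ring
    · intro i _
      fin_cases i <;> apply subset_convexHull <;> simp
  · apply convexHull_min
    · rintro p hp
      rcases hp with rfl | rfl | rfl <;> norm_num
    · rintro ⟨x, y⟩ ⟨hx1, hx2, hx3⟩ ⟨z, w⟩ ⟨hz1, hz2, hz3⟩ α β hα hβ hαβ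
      refine ⟨by simp only [Prod.fst_add, Prod.smul_fst, smul_eq_mul]; positivity, by simp only [Prod.snd_add, Prod.smul_snd, smul_eq_mul]; positivity, ?_⟩
      simp only [Prod.fst_add, Prod.snd_add, Prod.smul_fst, Prod.smul_snd, smul_eq_mul]
      nlinarith

lemma area_triangle (u w : ℝ × ℝ) :
    area (convexHull ℝ {(0 : ℝ × ℝ), u, w}) = |det2 u w| / 2 := by
  set T : (ℝ × ℝ) →ₗ[ℝ] (ℝ × ℝ) :=
    Matrix.toLin (Module.Basis.finTwoProd ℝ) (Module.Basis.finTwoProd ℝ) !![u.1, w.1; u.2, w.2] with hT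
  have hdet : LinearMap.det T = det2 u w := by
    rw [hT, LinearMap.det_toLin, Matrix.det_fin_two_of]
    simp [det2]; ring
  have himg : T '' (convexHull ℝ {((0:ℝ),(0:ℝ)), ((1:ℝ),(0:ℝ)), ((0:ℝ),(1:ℝ))})
      = convexHull ℝ {(0 : ℝ × ℝ), u, w} := by
    rw [LinearMap.image_convexHull]
    congr 1
    rw [Set.image_insert_eq, Set.image_insert_eq, Set.image_singleton]
    congr 1 <;> [skip; congr 1] <;>
      simp [hT, Matrix.toLin_finTwoProd_apply, Prod.ext_iff]
  rw [area, ← himg, Measure.addHaar_image_linearMap, hdet, ← S0_eq, vol_S0,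
    ← ENNReal.ofReal_mul (abs_nonneg _)]
  rw [ENNReal.toReal_ofReal (by positivity)]
  ring

lemma det2_ne (u w : ℝ × ℝ) (f : (ℝ × ℝ) →ₗ[ℝ] ℝ) (hu : f u = 1) (hw : f w = 1)
    (hne : w - u ≠ 0) : det2 u w ≠ 0 := by
  intro h
  set q : ℝ × ℝ := w - u with hq
  have hfq : f q = 0 := by rw [hq, map_sub, hu, hw]; ring
  have hdq : u.1 * q.2 = u.2 * q.1 := by
    simp only [hq, Prod.fst_sub, Prod.snd_sub]
    simp only [det2] at h
    ring_nf
    nlinarith [h]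
  have hqne : q ≠ 0 := hne
  have : ∃ t : ℝ, u = t • q := by
    by_cases h1 : q.1 = 0
    · have h2 : q.2 ≠ 0 := by
        intro h2
        exact hqne (Prod.ext h1 h2)
      have hu1 : u.1 = 0 := by
        have := hdq
        rw [h1, mul_zero] at this
        exact (mul_eq_zero.mp this).resolve_right h2
      exact ⟨u.2 / q.2, Prod.ext (by simp [hu1, h1]) (by simp; field_simp)⟩
    · exact ⟨u.1 / q.1, Prod.ext (by simp; field_simp) (by simp; field_simp; nlinarith [hdq])⟩
  obtain ⟨t, ht⟩ := this
  rw [ht, _root_.map_smul, hfq, smul_eq_mul, mul_zero] at hu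
  exact one_ne_zero hu.symm

lemma f_vals (u w : ℝ × ℝ) (f : (ℝ × ℝ) →ₗ[ℝ] ℝ) (hu : f u = 1) (hw : f w = 1)
    (hd : det2 u w ≠ 0) :
    f (1, 0) = (w.2 - u.2) / det2 u w ∧ f (0, 1) = (u.1 - w.1) / det2 u w := by
  constructor
  · have h1 : det2 u w • ((1:ℝ), (0:ℝ)) = w.2 • u - u.2 • w := by
      simp [Prod.ext_iff, det2, Prod.smul_fst, Prod.smul_snd, smul_eq_mul]
      constructor <;> ring
    have := congrArg f h1
    rw [_root_.map_smul, map_sub, _root_.map_smul, _root_.map_smul, hu, hw, smul_eq_mul, smul_eq_mul, smul_eq_mul] at this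
    field_simp
    linarith [this]
  · have h1 : det2 u w • ((0:ℝ), (1:ℝ)) = (-w.1) • u + u.1 • w := by
      simp [Prod.ext_iff, det2, Prod.smul_fst, Prod.smul_snd, smul_eq_mul]
      constructor <;> ring
    have := congrArg f h1
    rw [_root_.map_smul, map_add, _root_.map_smul, _root_.map_smul, hu, hw, smul_eq_mul, smul_eq_mul, smul_eq_mul] at this
    field_simp
    linarith [this]

end Aux

/-- First part of Lemma 2.3 of Burago–Ivanov: for a centrally symmetric convex `2n`-gon
`K = a₁…a_{2n}` centered at the origin (vertices in counterclockwise cyclic order,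
no three consecutive vertices collinear), with side vectors `vᵢ`, supporting functionals
`fᵢ = 1` on the side `[aᵢ, a_{i+1}]`, and weights `pᵢ = 2·Area(triangle(0,aᵢ,a_{i+1}))/Area K`,
one has `pᵢ pⱼ |fᵢ ∧ fⱼ| = |vᵢ ∧ vⱼ| / (Area K)²` for all `i < j ≤ n`. -/
theorem weighted_wedge_eq_det_div_area_sq
    (n : ℕ) (hn : 1 ≤ n) (a : ℕ → ℝ × ℝ)
    (hsym : ∀ i, a (i + n) = - a i)
    (hconv : ∀ i, 0 < det2 (a (i + 1) - a i) (a (i + 2) - a (i + 1)))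
    (v : ℕ → ℝ × ℝ) (hv : ∀ i, v i = a (i + 1) - a i)
    (K : Set (ℝ × ℝ)) (hK : K = convexHull ℝ (a '' Set.Iio (2 * n)))
    (f : ℕ → (ℝ × ℝ) →ₗ[ℝ] ℝ)
    (hf : ∀ i, ∀ x ∈ segment ℝ (a i) (a (i + 1)), f i x = 1)
    (p : ℕ → ℝ)
    (hp : ∀ i, p i = 2 * area (convexHull ℝ {(0 : ℝ × ℝ), a i, a (i + 1)}) / area K) :
    ∀ i j, i < j → j < n →
      p i * p j * |wedgeF (f i) (f j)| = |det2 (v i) (v j)| / (area K) ^ 2 := by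
  intro i j hij hjn
  -- basic facts per index
  have key : ∀ k : ℕ, f k (a k) = 1 ∧ f k (a (k+1)) = 1 ∧ det2 (a k) (a (k+1)) ≠ 0 := by
    intro k
    have h1 : f k (a k) = 1 := hf k _ (left_mem_segment ℝ _ _)
    have h2 : f k (a (k+1)) = 1 := hf k _ (right_mem_segment ℝ _ _)
    have hne : a (k+1) - a k ≠ 0 := by
      intro h
      have := hconv k
      rw [h] at this
      simp [det2] at this
    exact ⟨h1, h2, det2_ne _ _ _ h1 h2 hne⟩
  obtain ⟨hi1, hi2, hiD⟩ := key i
  obtain ⟨hj1, hj2, hjD⟩ := key j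
  set A := area K with hA
  set Di := det2 (a i) (a (i+1)) with hDi
  set Dj := det2 (a j) (a (j+1)) with hDj
  have hpi : p i = |Di| / A := by
    rw [hp i, area_triangle]; ring
  have hpj : p j = |Dj| / A := by
    rw [hp j, area_triangle]; ring
  obtain ⟨hfi1, hfi2⟩ := f_vals _ _ _ hi1 hi2 hiD
  obtain ⟨hfj1, hfj2⟩ := f_vals _ _ _ hj1 hj2 hjD
  have hwedge : wedgeF (f i) (f j) = det2 (v i) (v j) / (Di * Dj) := by
    rw [wedgeF, hfi1, hfi2, hfj1, hfj2, ← hDi, ← hDj, hv, hv]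
    simp only [det2, Prod.fst_sub, Prod.snd_sub]
    field_simp
    ring
  rw [hpi, hpj, hwedge, abs_div, abs_mul]
  set x := |det2 (v i) (v j)| with hx
  have hM : |Di| * |Dj| ≠ 0 := by
    simp [abs_eq_zero, hiD, hjD]
  calc |Di| / A * (|Dj| / A) * (x / (|Di| * |Dj|))
      = (|Di| * |Dj|) * x / (A * A * (|Di| * |Dj|)) := by
        rw [div_mul_div_comm, div_mul_div_comm]
    _ = (|Di| * |Dj|) * x / ((|Di| * |Dj|) * (A * A)) := by ring_nf
    _ = x / (A * A) := mul_div_mul_left _ _ hM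
    _ = x / A ^ 2 := by rw [sq]
end

section
/- Let V be a finite-dimensional real vector space and A : GC₂(V) → ℝ₊ a 2-dimensional density (continuous, A(λσ) = |λ|A(σ)) on the cone GC₂(V) ⊂ Λ²V of simple 2-vectors. Then A admits a convex extension to Λ²V if and only if every 2-dimensional linear subspace P ⊂ V admits a calibrator, i.e., a 2-form ω ∈ Λ²V* with |ω(σ)| ≤ A(σ) for all simple 2-vectors σ, with equality whenever σ ∈ Λ²P. -/
open MeasureTheory

/-- The simple (decomposable) 2-vector `v ∧ w`, as an element of the second exterior
power `⋀[ℝ]^2 V`. -/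
noncomputable def simpleWedge {V : Type*} [AddCommGroup V] [Module ℝ V] (v w : V) :
    ⋀[ℝ]^2 V :=
  ⟨ExteriorAlgebra.ιMulti ℝ 2 ![v, w],
    ExteriorAlgebra.ιMulti_range ℝ 2 (Set.mem_range_self _)⟩

namespace SimpleWedgeAux

open ExteriorAlgebra

variable {V : Type*} [AddCommGroup V] [Module ℝ V]

lemma simpleWedge_val (v w : V) :
    (simpleWedge v w : ExteriorAlgebra ℝ V) = ι ℝ v * ι ℝ w := by
  show ιMulti ℝ 2 ![v, w] = _
  rw [ιMulti_apply]
  simp [List.ofFn_succ]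

lemma simpleWedge_self (v : V) : simpleWedge v v = 0 := by
  apply Subtype.ext
  simp [simpleWedge_val, ι_sq_zero]

lemma simpleWedge_smul_left (c : ℝ) (v w : V) :
    simpleWedge (c • v) w = c • simpleWedge v w := by
  apply Subtype.ext
  simp [simpleWedge_val, smul_mul_assoc]

lemma simpleWedge_smul_right (c : ℝ) (v w : V) :
    simpleWedge v (c • w) = c • simpleWedge v w := by
  apply Subtype.ext
  simp [simpleWedge_val, mul_smul_comm]

lemma simpleWedge_zero_right (v : V) : simpleWedge v 0 = 0 := by
  have := simpleWedge_smul_right (0 : ℝ) v v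
  simpa using this

lemma simpleWedge_combo (x y : V) (a b c d : ℝ) :
    simpleWedge (a • x + b • y) (c • x + d • y) = (a * d - b * c) • simpleWedge x y := by
  apply Subtype.ext
  have hswap : ι ℝ y * ι ℝ x = -(ι ℝ x * ι ℝ y) :=
    eq_neg_of_add_eq_zero_right (ι_add_mul_swap x y)
  simp only [simpleWedge_val, Submodule.coe_smul, map_add, _root_.map_smul]
  rw [add_mul, mul_add, mul_add, smul_mul_assoc, smul_mul_assoc, smul_mul_assoc, smul_mul_assoc,
    mul_smul_comm, mul_smul_comm, mul_smul_comm, mul_smul_comm]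
  simp only [ι_sq_zero, hswap, smul_zero, smul_neg]
  module

lemma simpleWedge_eq_zero_of_not_indep {v w : V} (h : ¬ LinearIndependent ℝ ![v, w]) :
    simpleWedge v w = 0 := by
  rw [linearIndependent_fin2] at h
  push_neg at h
  simp only [Matrix.cons_val_one, Matrix.head_cons, Matrix.cons_val_zero] at h
  by_cases hw : w = 0
  · rw [hw]; exact simpleWedge_zero_right v
  · obtain ⟨a, ha⟩ := h hw
    rw [← ha, simpleWedge_smul_left, simpleWedge_self, smul_zero]

lemma exists_subgradient {E : Type*} [NormedAddCommGroup E] [NormedSpace ℝ E]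
    [FiniteDimensional ℝ E] {g : E → ℝ} (hg : ConvexOn ℝ Set.univ g) (x₀ : E) :
    ∃ ℓ : E →ₗ[ℝ] ℝ, ∀ x, ℓ x - ℓ x₀ ≤ g x - g x₀ := by
  have hcont : Continuous g := hg.locallyLipschitz.continuous
  set S : Set (E × ℝ) := {p | g p.1 < p.2} with hS
  have hopen : IsOpen S := isOpen_lt (hcont.comp continuous_fst) continuous_snd
  have hconv : Convex ℝ S := by
    rintro ⟨p1, p2⟩ hp ⟨q1, q2⟩ hq a b ha hb hab
    simp only [hS, Set.mem_setOf_eq] at hp hq ⊢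
    calc g (a • p1 + b • q1) ≤ a * g p1 + b * g q1 :=
          hg.2 (Set.mem_univ _) (Set.mem_univ _) ha hb hab
      _ < a * p2 + b * q2 := by
          rcases eq_or_lt_of_le ha with rfl | ha'
          · simp only [zero_mul, zero_add]
            have hb1 : b = 1 := by linarith
            exact by nlinarith
          · rcases eq_or_lt_of_le hb with rfl | hb'
            · have ha1 : a = 1 := by linarith
              nlinarith
            · exact add_lt_add (by nlinarith) (by nlinarith)
  have hx₀ : (x₀, g x₀) ∉ S := by simp [hS]
  obtain ⟨f, hf⟩ := geometric_hahn_banach_open_point hconv hopen hx₀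
  set c : ℝ := f (0, 1) with hc
  set L : E →ₗ[ℝ] ℝ := f.toLinearMap.comp (LinearMap.inl ℝ E ℝ) with hL
  have hsplit : ∀ (x : E) (t : ℝ), f (x, t) = L x + t * c := by
    intro x t
    have h1 : (x, t) = (x, (0:ℝ)) + t • ((0:E), (1:ℝ)) := by
      simp [Prod.ext_iff]
    rw [h1, map_add, f.map_smul]
    simp [hL, hc, smul_eq_mul]
  have key : ∀ (x : E) (t : ℝ), g x < t → L x + t * c < L x₀ + g x₀ * c := by
    intro x t h
    have := hf (x, t) h
    rwa [hsplit, hsplit] at this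
  have hcneg : c < 0 := by
    have := key x₀ (g x₀ + 1) (by linarith)
    nlinarith
  have key2 : ∀ x, L x + g x * c ≤ L x₀ + g x₀ * c := by
    intro x
    by_contra h
    push_neg at h
    set D : ℝ := L x + g x * c - (L x₀ + g x₀ * c) with hD
    have hDpos : 0 < D := by simp only [hD]; linarith
    have ht : g x < g x + D / (-c) := by
      have : 0 < D / (-c) := div_pos hDpos (by linarith)
      linarith
    have h3 := key x (g x + D / (-c)) ht
    have hexp : (g x + D / (-c)) * c = g x * c - D := by
      have hdc : D / (-c) * (-c) = D := div_mul_cancel₀ D (by linarith : (-c) ≠ 0)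
      linear_combination -hdc
    rw [hexp] at h3
    rw [hD] at hDpos
    linarith
  refine ⟨(-c)⁻¹ • L, fun x => ?_⟩
  have h4 := key2 x
  have hinv : (-c) * (-c)⁻¹ = 1 := mul_inv_cancel₀ (by linarith)
  have hstep : L x - L x₀ ≤ (g x - g x₀) * (-c) := by nlinarith
  simp only [LinearMap.smul_apply, smul_eq_mul]
  calc (-c)⁻¹ * L x - (-c)⁻¹ * L x₀ = (L x - L x₀) * (-c)⁻¹ := by ring
    _ ≤ ((g x - g x₀) * (-c)) * (-c)⁻¹ :=
        mul_le_mul_of_nonneg_right hstep (inv_nonneg.mpr (by linarith))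
    _ = (g x - g x₀) * ((-c) * (-c)⁻¹) := by ring
    _ = g x - g x₀ := by rw [hinv, mul_one]

end SimpleWedgeAux

open SimpleWedgeAux

/-- A 2-dimensional density on a finite-dimensional vector space `V` (a continuous,
nonnegative, absolutely homogeneous function on the Grassmannian cone `GC₂(V)` of simple
2-vectors) admits a convex extension to `⋀²V` if and only if every 2-dimensional linear
subspace `P ⊆ V` admits a calibrator: a 2-form `ω` (linear functional on `⋀²V`) with
`|ω(σ)| ≤ A(σ)` for all simple 2-vectors `σ`, with equality whenever `σ ∈ ⋀²P`. -/
theorem convex_extension_iff_calibrators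
    (V : Type) [AddCommGroup V] [Module ℝ V] [FiniteDimensional ℝ V]
    (GC : Set (⋀[ℝ]^2 V))
    (hGC : GC = {σ : ⋀[ℝ]^2 V | ∃ v w : V, σ = simpleWedge v w})
    (A : (⋀[ℝ]^2 V) → ℝ)
    (hA_nonneg : ∀ σ ∈ GC, 0 ≤ A σ)
    (hA_hom : ∀ (c : ℝ), ∀ σ ∈ GC, A (c • σ) = |c| * A σ)
    (m : ℕ) (e : (⋀[ℝ]^2 V) ≃ₗ[ℝ] EuclideanSpace ℝ (Fin m))
    (hA_cont : Continuous fun x => A (e.symm x)) :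
    (∃ g : (⋀[ℝ]^2 V) → ℝ, ConvexOn ℝ Set.univ g ∧ ∀ σ ∈ GC, g σ = A σ) ↔
      (∀ P : Submodule ℝ V, Module.finrank ℝ P = 2 →
        ∃ ω : (⋀[ℝ]^2 V) →ₗ[ℝ] ℝ,
          (∀ σ ∈ GC, |ω σ| ≤ A σ) ∧
          (∀ v w : V, v ∈ P → w ∈ P →
            |ω (simpleWedge v w)| = A (simpleWedge v w))) := by
  have hGCmem : ∀ v w : V, simpleWedge v w ∈ GC := by
    intro v w; rw [hGC]; exact ⟨v, w, rfl⟩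
  have hGC0 : (0 : ⋀[ℝ]^2 V) ∈ GC := by
    have := hGCmem (0 : V) 0
    rwa [simpleWedge_zero_right] at this
  have hA0 : A 0 = 0 := by
    have := hA_hom 0 0 hGC0
    simpa using this
  constructor
  · -- convex extension → calibrators
    rintro ⟨g, hg, hgA⟩ P hP
    -- a basis of P
    let b := Module.finBasisOfFinrankEq ℝ P hP
    set x : V := (b 0 : V) with hx
    set y : V := (b 1 : V) with hy
    set σ₀ : ⋀[ℝ]^2 V := simpleWedge x y with hσ₀
    have hσ₀GC : σ₀ ∈ GC := hGCmem x y
    have hAσ₀ : 0 ≤ A σ₀ := hA_nonneg σ₀ hσ₀GC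
    have hline : ∀ t : ℝ, g (t • σ₀) = |t| * A σ₀ := by
      intro t
      have h1 : t • σ₀ = simpleWedge (t • x) y := (simpleWedge_smul_left t x y).symm
      rw [h1, hgA _ (hGCmem _ _), ← h1, hA_hom t σ₀ hσ₀GC]
    -- convexity transported to Euclidean space
    have hG : ConvexOn ℝ Set.univ (fun z : EuclideanSpace ℝ (Fin m) => g (e.symm z)) := by
      refine ⟨convex_univ, fun z _ w _ a c ha hc hac => ?_⟩
      simp only [map_add, _root_.map_smul]
      exact hg.2 (Set.mem_univ _) (Set.mem_univ _) ha hc hac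
    obtain ⟨ℓ, hℓ⟩ := exists_subgradient hG (e σ₀)
    set ω : (⋀[ℝ]^2 V) →ₗ[ℝ] ℝ := ℓ.comp e.toLinearMap with hω
    have hsub : ∀ τ : ⋀[ℝ]^2 V, ω τ - ω σ₀ ≤ g τ - g σ₀ := by
      intro τ
      have := hℓ (e τ)
      simpa [hω, LinearEquiv.symm_apply_apply] using this
    have hgσ₀ : g σ₀ = A σ₀ := hgA σ₀ hσ₀GC
    have hg0 : g 0 = 0 := by
      have := hline 0
      simpa using this
    have hωσ₀ : ω σ₀ = A σ₀ := by
      have h1 := hsub 0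
      rw [map_zero, hg0, hgσ₀] at h1
      have h2 := hsub ((2:ℝ) • σ₀)
      rw [LinearMap.map_smul, hline 2, hgσ₀] at h2
      simp only [smul_eq_mul] at h2
      have habs : |(2:ℝ)| = 2 := by norm_num
      rw [habs] at h2
      linarith
    have hbound : ∀ τ ∈ GC, |ω τ| ≤ A τ := by
      intro τ hτ
      have hneg : (-1 : ℝ) • τ ∈ GC := by
        rw [hGC] at hτ ⊢
        obtain ⟨v, w, rfl⟩ := hτ
        exact ⟨(-1 : ℝ) • v, w, (simpleWedge_smul_left (-1) v w).symm⟩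
      have h1 : ω τ ≤ A τ := by
        have := hsub τ
        rw [hgA τ hτ, hgσ₀] at this
        linarith [hωσ₀]
      have h2 : ω ((-1 : ℝ) • τ) ≤ A ((-1 : ℝ) • τ) := by
        have := hsub ((-1 : ℝ) • τ)
        rw [hgA _ hneg, hgσ₀] at this
        linarith [hωσ₀]
      rw [LinearMap.map_smul, hA_hom (-1) τ hτ] at h2
      simp only [smul_eq_mul, neg_one_mul, abs_neg, abs_one, one_mul] at h2
      exact abs_le.mpr ⟨by linarith, h1⟩
    refine ⟨ω, hbound, fun v w hv hw => ?_⟩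
    -- coordinates of v, w in the basis of P
    have coords : ∀ u : V, u ∈ P → ∃ a c : ℝ, u = a • x + c • y := by
      intro u hu
      refine ⟨b.repr ⟨u, hu⟩ 0, b.repr ⟨u, hu⟩ 1, ?_⟩
      have h1 := b.sum_repr ⟨u, hu⟩
      rw [Fin.sum_univ_two] at h1
      have h2 := congrArg (Subtype.val : P → V) h1
      simpa [hx, hy] using h2.symm
    obtain ⟨a1, a2, rfl⟩ := coords v hv
    obtain ⟨c1, c2, rfl⟩ := coords w hw
    rw [simpleWedge_combo]
    set t : ℝ := a1 * c2 - a2 * c1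
    rw [LinearMap.map_smul, hA_hom t σ₀ hσ₀GC]
    simp only [smul_eq_mul, abs_mul, hωσ₀, abs_of_nonneg hAσ₀]
    rw [← hσ₀, hωσ₀, abs_of_nonneg hAσ₀]
  · -- calibrators → convex extension
    intro hcal
    set Sset : Set ((⋀[ℝ]^2 V) →ₗ[ℝ] ℝ) := {ω | ∀ τ ∈ GC, |ω τ| ≤ A τ} with hSset
    have h0S : (0 : (⋀[ℝ]^2 V) →ₗ[ℝ] ℝ) ∈ Sset := by
      intro τ hτ
      simpa using hA_nonneg τ hτ
    -- uniform bound on each element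
    have hbdd : ∀ σ : ⋀[ℝ]^2 V, ∃ M : ℝ, 0 ≤ M ∧ ∀ ω ∈ Sset, |ω σ| ≤ M := by
      intro σ
      have hmem : (σ : ExteriorAlgebra ℝ V) ∈
          Submodule.span ℝ (Set.range (ExteriorAlgebra.ιMulti ℝ 2)) := by
        rw [ExteriorAlgebra.ιMulti_span_fixedDegree]
        exact σ.2
      have key : ∃ h : (σ : ExteriorAlgebra ℝ V) ∈ ⋀[ℝ]^2 V,
          ∃ M : ℝ, 0 ≤ M ∧ ∀ ω ∈ Sset, |ω ⟨(σ : ExteriorAlgebra ℝ V), h⟩| ≤ M := by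
        refine Submodule.span_induction
          (p := fun z _ => ∃ h : z ∈ ⋀[ℝ]^2 V,
            ∃ M : ℝ, 0 ≤ M ∧ ∀ ω ∈ Sset, |ω ⟨z, h⟩| ≤ M)
          ?_ ?_ ?_ ?_ hmem
        · rintro z ⟨f, rfl⟩
          have hf2 : ![f 0, f 1] = f := by
            funext i; fin_cases i <;> rfl
          have hmem2 : ExteriorAlgebra.ιMulti ℝ 2 f ∈ ⋀[ℝ]^2 V :=
            ExteriorAlgebra.ιMulti_range ℝ 2 (Set.mem_range_self _)
          refine ⟨hmem2, A (simpleWedge (f 0) (f 1)),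
            hA_nonneg _ (hGCmem _ _), fun ω hω => ?_⟩
          have heq : (⟨ExteriorAlgebra.ιMulti ℝ 2 f, hmem2⟩ : ⋀[ℝ]^2 V)
              = simpleWedge (f 0) (f 1) := by
            apply Subtype.ext
            show ExteriorAlgebra.ιMulti ℝ 2 f = ExteriorAlgebra.ιMulti ℝ 2 ![f 0, f 1]
            rw [hf2]
          rw [heq]
          exact hω _ (hGCmem _ _)
        · exact ⟨Submodule.zero_mem _, 0, le_refl 0, fun ω hω => by
            have : (⟨(0 : ExteriorAlgebra ℝ V), Submodule.zero_mem _⟩ : ⋀[ℝ]^2 V) = 0 := rfl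
            rw [this, map_zero]; simp⟩
        · rintro z w _ _ ⟨hz, M, hM0, hM⟩ ⟨hw, N, hN0, hN⟩
          refine ⟨Submodule.add_mem _ hz hw, M + N, by linarith, fun ω hω => ?_⟩
          have heq : (⟨z + w, Submodule.add_mem _ hz hw⟩ : ⋀[ℝ]^2 V)
              = ⟨z, hz⟩ + ⟨w, hw⟩ := rfl
          rw [heq, map_add]
          exact (abs_add_le _ _).trans (add_le_add (hM ω hω) (hN ω hω))
        · rintro a z _ ⟨hz, M, hM0, hM⟩
          refine ⟨Submodule.smul_mem _ a hz, |a| * M,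
            mul_nonneg (abs_nonneg a) hM0, fun ω hω => ?_⟩
          have heq : (⟨a • z, Submodule.smul_mem _ a hz⟩ : ⋀[ℝ]^2 V)
              = a • (⟨z, hz⟩ : ⋀[ℝ]^2 V) := rfl
          rw [heq, LinearMap.map_smul, smul_eq_mul, abs_mul]
          exact mul_le_mul_of_nonneg_left (hM ω hω) (abs_nonneg a)
      obtain ⟨h, M, hM0, hM⟩ := key
      refine ⟨M, hM0, fun ω hω => ?_⟩
      have heq : (⟨(σ : ExteriorAlgebra ℝ V), h⟩ : ⋀[ℝ]^2 V) = σ := rfl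
      rw [heq] at hM
      exact hM ω hω
    set g : (⋀[ℝ]^2 V) → ℝ := fun σ => sSup ((fun ω : (⋀[ℝ]^2 V) →ₗ[ℝ] ℝ => ω σ) '' Sset)
      with hgdef
    have hne : ∀ σ, ((fun ω : (⋀[ℝ]^2 V) →ₗ[ℝ] ℝ => ω σ) '' Sset).Nonempty :=
      fun σ => ⟨(0 : (⋀[ℝ]^2 V) →ₗ[ℝ] ℝ) σ, Set.mem_image_of_mem _ h0S⟩
    have hbddA : ∀ σ, BddAbove ((fun ω : (⋀[ℝ]^2 V) →ₗ[ℝ] ℝ => ω σ) '' Sset) := by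
      intro σ
      obtain ⟨M, _, hM⟩ := hbdd σ
      exact ⟨M, by rintro _ ⟨ω, hω, rfl⟩; exact (le_abs_self _).trans (hM ω hω)⟩
    have hle : ∀ ω ∈ Sset, ∀ σ, ω σ ≤ g σ := fun ω hω σ =>
      le_csSup (hbddA σ) (Set.mem_image_of_mem _ hω)
    refine ⟨g, ⟨convex_univ, fun z _ w _ a c ha hc hac => ?_⟩, fun σ hσ => ?_⟩
    · -- convexity
      refine csSup_le (hne _) ?_
      rintro _ ⟨ω, hω, rfl⟩
      show ω (a • z + c • w) ≤ a • g z + c • g w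
      have : ω (a • z + c • w) = a * ω z + c * ω w := by
        rw [map_add, LinearMap.map_smul, LinearMap.map_smul]; simp [smul_eq_mul]
      rw [this]
      have h1 : a * ω z ≤ a * g z := mul_le_mul_of_nonneg_left (hle ω hω z) ha
      have h2 : c * ω w ≤ c * g w := mul_le_mul_of_nonneg_left (hle ω hω w) hc
      simp only [smul_eq_mul]
      linarith
    · -- g = A on GC
      have hub : g σ ≤ A σ := by
        refine csSup_le (hne _) ?_
        rintro _ ⟨ω, hω, rfl⟩
        exact (le_abs_self _).trans (hω σ hσ)
      have hlb : A σ ≤ g σ := by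
        rw [hGC] at hσ
        obtain ⟨v, w, rfl⟩ := hσ
        by_cases h0 : simpleWedge v w = (0 : ⋀[ℝ]^2 V)
        · rw [h0, hA0]
          have := hle 0 h0S 0
          simpa using this
        · have hindep : LinearIndependent ℝ ![v, w] := by
            by_contra hni
            exact h0 (simpleWedge_eq_zero_of_not_indep hni)
          set P : Submodule ℝ V := Submodule.span ℝ (Set.range ![v, w]) with hPdef
          have hrank : Module.finrank ℝ P = 2 := by
            rw [hPdef, finrank_span_eq_card hindep]
            simp
          obtain ⟨ω, hω1, hω2⟩ := hcal P hrank
          have hv : v ∈ P := Submodule.subset_span ⟨0, rfl⟩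
          have hw : w ∈ P := Submodule.subset_span ⟨1, rfl⟩
          have heq := hω2 v w hv hw
          have hωS : ω ∈ Sset := hω1
          rcases (abs_eq (hA_nonneg _ (hGCmem v w))).mp heq with h | h
          · rw [← h]
            exact hle ω hωS _
          · have hnegS : -ω ∈ Sset := by
              intro τ hτ
              simpa [abs_neg] using hω1 τ hτ
            have : (-ω) (simpleWedge v w) = A (simpleWedge v w) := by
              simp [h]
            rw [← this]
            exact hle (-ω) hnegS _
      linarith
end
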